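/- Let p be a prime and let A → B be an étale ring homomorphism between commutative rings of characteristic p (i.e. B is an étale A-algebra). If the Frobenius endomorphism of A is surjective, then the Frobenius endomorphism of B is surjective. -/

import Mathlib

universe u

open scoped TensorProduct

set_option maxHeartbeats 1000000
set_option synthInstance.maxHeartbeats 200000

/-- The subalgebra of `p`-th powers. -/
noncomputable def pPowers (p : ℕ) [Fact p.Prime] (A B : Type u) [CommRing A] [CommRing B]
    [CharP B p] [Algebra A B]
    (h3 : ∀ a : A, ∃ c : B, c ^ p = algebraMap A B a) : Subalgebra A B where
  carrier := {b : B | ∃ x : B, x ^ p = b}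
  mul_mem' := by rintro _ _ ⟨x, rfl⟩ ⟨y, rfl⟩; exact ⟨x * y, mul_pow x y p⟩
  add_mem' := by rintro _ _ ⟨x, rfl⟩ ⟨y, rfl⟩; exact ⟨x + y, add_pow_char x y p⟩
  algebraMap_mem' := fun a => h3 a

/-- Let `p` be a prime and let `A → B` be an étale ring homomorphism
between commutative rings of characteristic `p` (i.e. `B` is an étale `A`-algebra).
If the Frobenius endomorphism (`x ↦ x ^ p`) of `A` is surjective, then the Frobenius
endomorphism of `B` is surjective. -/
theorem statement7 (p : ℕ) [Fact p.Prime] (A B : Type u) [CommRing A] [CommRing B]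
    [CharP A p] [CharP B p] [Algebra A B] [Algebra.Etale A B]
    (hA : Function.Surjective fun x : A => x ^ p) :
    Function.Surjective fun x : B => x ^ p := by
  classical
  have hp : p ≠ 0 := (Fact.out : p.Prime).ne_zero
  obtain hB | hB := subsingleton_or_nontrivial B
  · exact fun b => ⟨0, Subsingleton.elim _ _⟩
  -- the subalgebra of `p`-th powers of `B`
  have h3 : ∀ a : A, ∃ c : B, c ^ p = algebraMap A B a := by
    intro a
    obtain ⟨a', ha'⟩ := hA a
    exact ⟨algebraMap A B a', by rw [← map_pow]; exact congrArg _ ha'⟩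
  set T : Subalgebra A B := pPowers p A B h3 with hT
  have hmemT : ∀ x : B, x ^ p ∈ T := fun x => ⟨x, rfl⟩
  -- `B` is module-finite over `T`
  haveI : Algebra.FiniteType T B :=
    Algebra.FiniteType.of_restrictScalars_finiteType (R := A) (S := T) (A := B)
  haveI : Algebra.IsIntegral T B := by
    constructor
    intro b
    refine ⟨Polynomial.X ^ p - Polynomial.C ⟨b ^ p, hmemT b⟩,
      Polynomial.monic_X_pow_sub_C _ hp, ?_⟩
    have : algebraMap T B ⟨b ^ p, hmemT b⟩ = b ^ p := rfl
    simp [Polynomial.eval₂_sub, this]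
  haveI : Module.Finite T B := Algebra.IsIntegral.finite
  -- The tensor product `D = B ⊗[T] B`
  haveI : SMulCommClass T A B :=
    ⟨fun t a b => by simp only [Algebra.smul_def, mul_left_comm]⟩
  set D := B ⊗[T] B with hD
  -- swapping elements of `T` across the tensor
  have halg : ∀ t : T, algebraMap T B t = (t : B) := fun t => rfl
  have hswap : ∀ t : T, ((t : B) ⊗ₜ[T] (1 : B) : D) = 1 ⊗ₜ[T] (t : B) := by
    intro t
    have h1 : ((t : B) ⊗ₜ[T] (1 : B) : D) = algebraMap T D t := by
      rfl
    have h2 : ((1 : B) ⊗ₜ[T] (t : B) : D) = algebraMap T D t := by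
      exact (Algebra.TensorProduct.algebraMap_apply' (A := B) (B := B) t).symm
    rw [h1, h2]
  -- `i₁ : b ↦ b ⊗ 1` and `i₂ : b ↦ 1 ⊗ b` as `A`-algebra maps
  set i₁ : B →ₐ[A] D := Algebra.TensorProduct.includeLeft with hi₁
  set i₂ : B →ₐ[A] D :=
    { Algebra.TensorProduct.includeRight.toRingHom with
      commutes' := fun a => by
        show (1 : B) ⊗ₜ[T] (algebraMap A B a) = algebraMap A D a
        have : algebraMap A D a = (algebraMap A B a) ⊗ₜ[T] 1 := rfl
        rw [this, IsScalarTower.algebraMap_apply A T B a, halg]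
        exact (hswap _).symm } with hi₂
  -- `D` has characteristic `p`
  have hl : ∀ x : B, (Algebra.TensorProduct.lmul' (S := B) T) (i₁ x) = x := by
    intro x
    show (Algebra.TensorProduct.lmul' (S := B) T) (x ⊗ₜ[T] 1) = x
    rw [Algebra.TensorProduct.lmul'_apply_tmul, mul_one]
  haveI : CharP D p := by
    have hc : ∀ n : ℕ, ((n : D)) = i₁ ((n : B)) := fun n => (map_natCast i₁ n).symm
    constructor
    intro n
    rw [hc n, ← CharP.cast_eq_zero_iff B p n]
    constructor
    · intro h
      have h2 := congrArg (Algebra.TensorProduct.lmul' (S := B) T) h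
      rwa [hl, map_zero] at h2
    · intro h
      rw [h, map_zero]
  -- generators of `B` over `A`
  obtain ⟨fs, hfs⟩ := (inferInstance : Algebra.FiniteType A B).out
  set G : Set D := (fun x : B => (x ⊗ₜ[T] 1 : D) - 1 ⊗ₜ[T] x) '' ↑fs with hG
  set I₀ : Ideal D := Ideal.span G with hI₀def
  have hGnil : ∀ g ∈ G, g ^ p = 0 := by
    rintro _ ⟨x, hx, rfl⟩
    rw [sub_pow_char, Algebra.TensorProduct.tmul_pow, Algebra.TensorProduct.tmul_pow,
      one_pow]
    have := hswap ⟨x ^ p, hmemT x⟩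
    simp only at this
    rw [this, sub_self]
  have hI₀ : IsNilpotent I₀ := by
    obtain ⟨n, hn⟩ := Ideal.exists_pow_le_of_le_radical_of_fg (I := I₀) (J := ⊥)
      (Ideal.span_le.mpr (fun g hg => by
        show g ∈ (⊥ : Ideal D).radical
        rw [← Ideal.zero_eq_bot, ← nilradical]
        exact mem_nilradical.mpr ⟨p, hGnil g hg⟩))
      (Submodule.fg_span ((fs.finite_toSet).image _))
    exact ⟨n, le_bot_iff.mp hn⟩
  -- the two maps agree modulo the nilpotent ideal `I₀`
  have hmod : ∀ x : B, Ideal.Quotient.mk I₀ (i₁ x) = Ideal.Quotient.mk I₀ (i₂ x) := by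
    have hle : Algebra.adjoin A (↑fs : Set B) ≤ AlgHom.equalizer
        ((Ideal.Quotient.mkₐ A I₀).comp i₁) ((Ideal.Quotient.mkₐ A I₀).comp i₂) := by
      rw [Algebra.adjoin_le_iff]
      intro x hx
      show Ideal.Quotient.mk I₀ (i₁ x) = Ideal.Quotient.mk I₀ (i₂ x)
      rw [Ideal.Quotient.eq]
      exact Ideal.subset_span ⟨x, hx, rfl⟩
    intro x
    have : x ∈ Algebra.adjoin A (↑fs : Set B) := by rw [hfs]; trivial
    exact hle this
  -- conclude `i₁ = i₂` by formal unramifiedness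
  have heq : i₁ = i₂ := Algebra.FormallyUnramified.ext I₀ hI₀ hmod
  have key : ∀ x : B, (x ⊗ₜ[T] 1 : D) = 1 ⊗ₜ[T] x := fun x => AlgHom.congr_fun heq x
  -- `T → B` is surjective
  have hsurj : Function.Surjective (algebraMap T B) :=
    Algebra.isEpi_iff_surjective_algebraMap_of_finite.mp
      ((Algebra.isEpi_iff_forall_one_tmul_eq T B).mpr fun x => (key x).symm)
  intro b
  obtain ⟨t, ht⟩ := hsurj b
  obtain ⟨c, hc⟩ := t.2
  exact ⟨c, by simpa [hc] using ht⟩
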